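/- Consider the input affine system ẋ = f(x) + g(x)u, y = h(x), and let V : ℝⁿ → ℝ be a nonnegative continuously differentiable function with V(0) = 0. Assume that g(x)ᵀ∇h(x) = I for all x ∈ ℝⁿ, and that f(x)ᵀ∇h(x)∇h(x)ᵀf(x) − 2∇V(x)ᵀf(x) − 4h(x)ᵀh(x) = 0 for all x ∈ ℝⁿ. Then the negative imaginary dissipation inequality ∇V(x)ᵀ(f(x) + g(x)u) ≤ uᵀ∇h(x)ᵀ(f(x) + g(x)u) holds for all x, u ∈ ℝⁿ if and only if the L₂-gain ≤ 1 dissipation inequality ∇V(x)ᵀ(f(x) + g(x)u) ≤ uᵀu − h(x)ᵀh(x) holds for all x, u ∈ ℝⁿ. -/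
import Mathlib


open Matrix

private lemma dot_self_nonneg {n : ℕ} (v : Fin n → ℝ) : 0 ≤ v ⬝ᵥ v := by
  apply Finset.sum_nonneg
  intro i _
  exact mul_self_nonneg _

/-- For the input affine system ẋ = f(x) + g(x)u, y = h(x), with a
nonnegative C¹ storage function `V`, `V 0 = 0`, assume `g(x)ᵀ∇h(x) = I` and
`f(x)ᵀ∇h(x)∇h(x)ᵀf(x) − 2∇V(x)ᵀf(x) − 4h(x)ᵀh(x) = 0` for all `x`. Then the
negative imaginary dissipation inequality
`∇V(x)ᵀ(f(x) + g(x)u) ≤ uᵀ∇h(x)ᵀ(f(x) + g(x)u)` holds for all `x`, `u` iff the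
L₂-gain ≤ 1 dissipation inequality
`∇V(x)ᵀ(f(x) + g(x)u) ≤ uᵀu − h(x)ᵀh(x)` holds for all `x`, `u`. -/
theorem negativeImaginary_iff_L2gain {n : ℕ}
    (f : (Fin n → ℝ) → (Fin n → ℝ))
    (g : (Fin n → ℝ) → Matrix (Fin n) (Fin n) ℝ)
    (h : (Fin n → ℝ) → (Fin n → ℝ))
    (hf0 : f 0 = 0) (hh0 : h 0 = 0)
    (V : (Fin n → ℝ) → ℝ)
    (gradV : (Fin n → ℝ) → (Fin n → ℝ))
    (gradh : (Fin n → ℝ) → Matrix (Fin n) (Fin n) ℝ)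
    (hVC1 : ContDiff ℝ 1 V)
    (hVgrad : ∀ x v, fderiv ℝ V x v = gradV x ⬝ᵥ v)
    (hhdiff : Differentiable ℝ h)
    (hhgrad : ∀ x v, fderiv ℝ h x v = (gradh x)ᵀ *ᵥ v)
    (hVnonneg : ∀ x, 0 ≤ V x) (hV0 : V 0 = 0)
    (hgh : ∀ x, (g x)ᵀ * gradh x = 1)
    (hiden : ∀ x, f x ⬝ᵥ ((gradh x * (gradh x)ᵀ) *ᵥ f x)
        - 2 * (gradV x ⬝ᵥ f x) - 4 * (h x ⬝ᵥ h x) = 0) :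
    (∀ x u : Fin n → ℝ,
        gradV x ⬝ᵥ (f x + g x *ᵥ u) ≤ u ⬝ᵥ ((gradh x)ᵀ *ᵥ (f x + g x *ᵥ u)))
    ↔ (∀ x u : Fin n → ℝ,
        gradV x ⬝ᵥ (f x + g x *ᵥ u) ≤ u ⬝ᵥ u - h x ⬝ᵥ h x) := by
  -- `gradh x * (g x)ᵀ = 1`
  have hgh' : ∀ x, gradh x * (g x)ᵀ = 1 := fun x =>
    mul_eq_one_comm.mp (hgh x)
  have hghT : ∀ x, (gradh x)ᵀ * g x = 1 := fun x => by
    have := congrArg Matrix.transpose (hgh x)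
    simpa [Matrix.transpose_mul] using this
  -- notation: p = ∇hᵀ f, q = gᵀ ∇V
  -- e1: ∇V ⬝ (g *ᵥ u) = q ⬝ u
  have e1 : ∀ x (u : Fin n → ℝ),
      gradV x ⬝ᵥ (g x *ᵥ u) = ((g x)ᵀ *ᵥ gradV x) ⬝ᵥ u := by
    intro x u
    rw [Matrix.dotProduct_mulVec, Matrix.mulVec_transpose]
  -- e2: ∇hᵀ *ᵥ (g *ᵥ u) = u
  have e2 : ∀ x (u : Fin n → ℝ), (gradh x)ᵀ *ᵥ (g x *ᵥ u) = u := by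
    intro x u
    rw [Matrix.mulVec_mulVec, hghT x, Matrix.one_mulVec]
  -- e3: p ⬝ q = ∇V ⬝ f
  have e3 : ∀ x, ((gradh x)ᵀ *ᵥ f x) ⬝ᵥ ((g x)ᵀ *ᵥ gradV x)
      = gradV x ⬝ᵥ f x := by
    intro x
    rw [Matrix.mulVec_transpose, ← Matrix.dotProduct_mulVec,
      Matrix.mulVec_mulVec, hgh' x, Matrix.one_mulVec, dotProduct_comm]
  -- e4: p ⬝ p = f ⬝ ((∇h ∇hᵀ) f)
  have e4 : ∀ x, ((gradh x)ᵀ *ᵥ f x) ⬝ᵥ ((gradh x)ᵀ *ᵥ f x)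
      = f x ⬝ᵥ ((gradh x * (gradh x)ᵀ) *ᵥ f x) := by
    intro x
    have h1 : f x ⬝ᵥ ((gradh x * (gradh x)ᵀ) *ᵥ f x)
        = (f x ᵥ* gradh x) ⬝ᵥ ((gradh x)ᵀ *ᵥ f x) := by
      rw [← Matrix.mulVec_mulVec, Matrix.dotProduct_mulVec]
    rw [← Matrix.mulVec_transpose] at h1
    exact h1.symm
  constructor
  · -- NI → L2
    intro H x u
    set p := (gradh x)ᵀ *ᵥ f x with hp
    set q := (g x)ᵀ *ᵥ gradV x with hq
    have key : 4 * (gradV x ⬝ᵥ f x) + (p - q) ⬝ᵥ (p - q) ≤ 0 := by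
      have H0 := H x ((-(1/2 : ℝ)) • (p - q))
      rw [dotProduct_add, Matrix.mulVec_add, e2 x] at H0
      rw [e1 x, dotProduct_add] at H0
      simp only [hp, dotProduct_smul, smul_dotProduct,
        sub_dotProduct, dotProduct_sub, smul_eq_mul] at H0
      have hcomm : q ⬝ᵥ p = p ⬝ᵥ q := dotProduct_comm _ _
      simp only [dotProduct_sub, sub_dotProduct]
      nlinarith [H0, hcomm]
    have hid := hiden x
    rw [← e4 x, ← hp] at hid
    have ha : gradV x ⬝ᵥ f x = p ⬝ᵥ q := (e3 x).symm
    -- w ⬝ w ≤ 0 where w = p + q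
    have hw : (p + q) ⬝ᵥ (p + q) ≤ 0 := by
      have hcomm : q ⬝ᵥ p = p ⬝ᵥ q := dotProduct_comm _ _
      simp only [dotProduct_add, add_dotProduct,
        dotProduct_sub, sub_dotProduct] at key ⊢
      nlinarith [key, hcomm, ha]
    -- conclude
    have hv : 0 ≤ (u - (1/2 : ℝ) • q) ⬝ᵥ (u - (1/2 : ℝ) • q) :=
      dot_self_nonneg _
    rw [dotProduct_add, e1 x, ← hq]
    have hcomm : q ⬝ᵥ u = u ⬝ᵥ q := dotProduct_comm _ _
    have hcomm2 : q ⬝ᵥ p = p ⬝ᵥ q := dotProduct_comm _ _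
    simp only [dotProduct_sub, sub_dotProduct,
      dotProduct_add, add_dotProduct,
      dotProduct_smul, smul_dotProduct, smul_eq_mul] at hv hw ⊢
    nlinarith [hv, hw, hcomm, hcomm2, ha, hid]
  · -- L2 → NI
    intro H x u
    set p := (gradh x)ᵀ *ᵥ f x with hp
    set q := (g x)ᵀ *ᵥ gradV x with hq
    have hid := hiden x
    rw [← e4 x, ← hp] at hid
    have ha : gradV x ⬝ᵥ f x = p ⬝ᵥ q := (e3 x).symm
    have key : 4 * (gradV x ⬝ᵥ f x) + 4 * (h x ⬝ᵥ h x) + q ⬝ᵥ q ≤ 0 := by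
      have H0 := H x ((1/2 : ℝ) • q)
      rw [dotProduct_add, e1 x, ← hq] at H0
      simp only [dotProduct_smul, smul_dotProduct,
        smul_eq_mul] at H0
      nlinarith [H0]
    have hw : (p + q) ⬝ᵥ (p + q) ≤ 0 := by
      simp only [dotProduct_add, add_dotProduct]
      have hcomm : q ⬝ᵥ p = p ⬝ᵥ q := dotProduct_comm _ _
      nlinarith [key, hcomm, ha, hid]
    have hv : 0 ≤ (u + (1/2 : ℝ) • (p - q)) ⬝ᵥ (u + (1/2 : ℝ) • (p - q)) :=
      dot_self_nonneg _
    rw [dotProduct_add, Matrix.mulVec_add, e2 x, e1 x, ← hq,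
      dotProduct_add, ← hp]
    have hcomm : q ⬝ᵥ u = u ⬝ᵥ q := dotProduct_comm _ _
    have hcomm2 : q ⬝ᵥ p = p ⬝ᵥ q := dotProduct_comm _ _
    have hcomm3 : p ⬝ᵥ u = u ⬝ᵥ p := dotProduct_comm _ _
    simp only [dotProduct_sub, sub_dotProduct,
      dotProduct_add, add_dotProduct,
      dotProduct_smul, smul_dotProduct, smul_eq_mul] at hv hw ⊢
    nlinarith [hv, hw, hcomm, hcomm2, hcomm3, ha]
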